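/- arXiv:1504.07390 — 2 statements merged into one kernel-verified Lean document; each statement's English description precedes it below -/
import Mathlib

section
/- For a standard normal random variable X, positive reals σ₀, κ, Δ, and η > 0 with η < 1 + 1/κ², the expectation E[exp(η(κ²σ₀²X² + 2σ₀XΔ - Δ²)/(2(1+κ²)σ₀²))] equals (√(1+κ²)/√(1+(1-η)κ²)) · exp(η(η-1)Δ²/(2σ₀²(1+(1-η)κ²))). -/
open MeasureTheory ProbabilityTheory Real
open scoped ENNReal NNReal

lemma integral_rexp_quadratic {b : ℝ} (hb : b < 0) (c d : ℝ) :
    ∫ x : ℝ, Real.exp (b * x ^ 2 + c * x + d)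
      = Real.sqrt (π / (-b)) * Real.exp (d - c ^ 2 / (4 * b)) := by
  have hb' : b ≠ 0 := ne_of_lt hb
  have h : ∀ x : ℝ, b * x ^ 2 + c * x + d
      = -(-b) * (x + c / (2 * b)) ^ 2 + (d - c ^ 2 / (4 * b)) := by
    intro x; field_simp; ring
  simp_rw [h, Real.exp_add, integral_mul_const]
  rw [integral_add_right_eq_self (fun x => Real.exp (-(-b) * x ^ 2)) (c / (2 * b)),
    integral_gaussian]

/-- The `η`-th moment of the single-observation likelihood ratio between
`N(Δ, (1+κ²)σ₀²)` and `N(0, σ₀²)`, computed under the null: for a standard normal `X`,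
`σ₀, κ > 0`, `0 < η < 1 + 1/κ²`,
`E[exp(η (κ²σ₀²X² + 2σ₀XΔ - Δ²) / (2(1+κ²)σ₀²))]
  = √(1+κ²)/√(1+(1-η)κ²) · exp(η(η-1)Δ² / (2σ₀²(1+(1-η)κ²)))`. -/
theorem moment_likelihood_ratio
    {Ω : Type*} [MeasurableSpace Ω] (P : Measure Ω) [IsProbabilityMeasure P]
    (X : Ω → ℝ) (hXmeas : Measurable X) (hX : P.map X = gaussianReal 0 1)
    (σ₀ κ Δ η : ℝ) (hσ₀ : 0 < σ₀) (hκ : 0 < κ) (hΔ : 0 < Δ)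
    (hη : 0 < η) (hη' : η < 1 + 1 / κ ^ 2) :
    ∫ ω, Real.exp (η * (κ ^ 2 * σ₀ ^ 2 * (X ω) ^ 2 + 2 * σ₀ * X ω * Δ - Δ ^ 2)
        / (2 * (1 + κ ^ 2) * σ₀ ^ 2)) ∂P
      = Real.sqrt (1 + κ ^ 2) / Real.sqrt (1 + (1 - η) * κ ^ 2)
        * Real.exp (η * (η - 1) * Δ ^ 2 / (2 * σ₀ ^ 2 * (1 + (1 - η) * κ ^ 2))) := by
  have hκ2 : (0:ℝ) < 1 + κ ^ 2 := by positivity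
  have hp : (0:ℝ) < 1 + (1 - η) * κ ^ 2 := by
    have h1 : η * κ ^ 2 < (1 + 1 / κ ^ 2) * κ ^ 2 :=
      mul_lt_mul_of_pos_right hη' (by positivity)
    have h2 : (1 + 1 / κ ^ 2) * κ ^ 2 = κ ^ 2 + 1 := by field_simp
    nlinarith
  set f : ℝ → ℝ := fun x => Real.exp (η * (κ ^ 2 * σ₀ ^ 2 * x ^ 2 + 2 * σ₀ * x * Δ - Δ ^ 2)
      / (2 * (1 + κ ^ 2) * σ₀ ^ 2)) with hf
  have hfmeas : Measurable f := by fun_prop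
  have h1 : ∫ ω, f (X ω) ∂P = ∫ x, f x ∂(gaussianReal 0 1) := by
    rw [← hX, integral_map hXmeas.aemeasurable hfmeas.aestronglyMeasurable]
  have hdens : gaussianReal 0 1
      = volume.withDensity (fun x => ((gaussianPDFReal 0 1 x).toNNReal : ℝ≥0∞)) := by
    rw [gaussianReal_of_var_ne_zero 0 one_ne_zero]
    rfl
  have h2 : ∫ x, f x ∂(gaussianReal 0 1)
      = ∫ x, gaussianPDFReal 0 1 x * f x := by
    rw [hdens, integral_withDensity_eq_integral_smul
      ((measurable_gaussianPDFReal 0 1).real_toNNReal) f]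
    congr 1
    ext x
    rw [NNReal.smul_def, Real.coe_toNNReal _ (gaussianPDFReal_nonneg 0 1 x), smul_eq_mul]
  -- quadratic coefficients
  set b : ℝ := η * κ ^ 2 / (2 * (1 + κ ^ 2)) - 1 / 2 with hbdef
  set c : ℝ := η * Δ / ((1 + κ ^ 2) * σ₀) with hcdef
  set d : ℝ := -(η * Δ ^ 2) / (2 * (1 + κ ^ 2) * σ₀ ^ 2) with hddef
  have hb_eq : b = -(1 + (1 - η) * κ ^ 2) / (2 * (1 + κ ^ 2)) := by
    rw [hbdef]; field_simp; ring
  have hbneg : b < 0 := by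
    rw [hb_eq]
    apply div_neg_of_neg_of_pos (by linarith) (by linarith)
  have h3 : ∀ x : ℝ, gaussianPDFReal 0 1 x * f x
      = (Real.sqrt (2 * π))⁻¹ * Real.exp (b * x ^ 2 + c * x + d) := by
    intro x
    rw [hf]
    simp only [gaussianPDFReal, NNReal.coe_one, mul_one, sub_zero]
    rw [mul_assoc, ← Real.exp_add]
    congr 2
    rw [hbdef, hcdef, hddef]
    field_simp
    ring
  have h4 : ∫ x, gaussianPDFReal 0 1 x * f x
      = (Real.sqrt (2 * π))⁻¹ * (Real.sqrt (π / (-b)) * Real.exp (d - c ^ 2 / (4 * b))) := by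
    simp_rw [h3]
    rw [integral_const_mul, integral_rexp_quadratic hbneg]
  have hsqrt : (Real.sqrt (2 * π))⁻¹ * Real.sqrt (π / (-b))
      = Real.sqrt (1 + κ ^ 2) / Real.sqrt (1 + (1 - η) * κ ^ 2) := by
    have : π / (-b) = 2 * π * ((1 + κ ^ 2) / (1 + (1 - η) * κ ^ 2)) := by
      rw [hb_eq]
      field_simp
    rw [this, Real.sqrt_mul (by positivity : (0:ℝ) ≤ 2 * π),
      Real.sqrt_div (by positivity : (0:ℝ) ≤ 1 + κ ^ 2)]
    rw [← mul_assoc, inv_mul_cancel₀ (by positivity : Real.sqrt (2 * π) ≠ 0), one_mul]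
  have hexp : d - c ^ 2 / (4 * b)
      = η * (η - 1) * Δ ^ 2 / (2 * σ₀ ^ 2 * (1 + (1 - η) * κ ^ 2)) := by
    have hσne : σ₀ ≠ 0 := ne_of_gt hσ₀
    have hκ2ne : (1 + κ ^ 2 : ℝ) ≠ 0 := ne_of_gt hκ2
    have hpne : (1 + (1 - η) * κ ^ 2 : ℝ) ≠ 0 := ne_of_gt hp
    have h4b : 4 * b = -(2 * (1 + (1 - η) * κ ^ 2) / (1 + κ ^ 2)) := by
      rw [hb_eq]; field_simp; ring
    rw [hddef, hcdef, h4b, div_neg, sub_neg_eq_add]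
    have hpne' : (1 - η * κ ^ 2 + κ ^ 2 : ℝ) ≠ 0 := by intro h; apply hpne; linarith
    field_simp
    ring_nf
    field_simp
    ring
  calc ∫ ω, f (X ω) ∂P = ∫ x, gaussianPDFReal 0 1 x * f x := by rw [h1, h2]
    _ = (Real.sqrt (2 * π))⁻¹ * (Real.sqrt (π / (-b)) * Real.exp (d - c ^ 2 / (4 * b))) := h4
    _ = _ := by rw [← mul_assoc, hsqrt, hexp]
end

section
/- The function r defined on (0,∞) by r(c) = √(2+c²)·(c+√(2+3c²)) / (2(1+c²)) attains its maximum value √2 at c = √2, i.e. r(√2) = √2 and r(c) ≤ √2 for all c > 0. -/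
/-- The price of adaptation in the equilibrium regime. -/
noncomputable def priceOfAdaptation (c : ℝ) : ℝ :=
  Real.sqrt (2 + c ^ 2) * (c + Real.sqrt (2 + 3 * c ^ 2)) / (2 * (1 + c ^ 2))

/-- The price of adaptation `r(c) = √(2+c²)(c+√(2+3c²))/(2(1+c²))` attains its maximum
value `√2` at `c = √2`: `r(√2) = √2` and `r(c) ≤ √2` for all `c > 0`. -/
theorem priceOfAdaptation_max :
    priceOfAdaptation (Real.sqrt 2) = Real.sqrt 2 ∧
    ∀ c : ℝ, 0 < c → priceOfAdaptation c ≤ Real.sqrt 2 := by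
  have hs : Real.sqrt 2 ^ 2 = 2 := Real.sq_sqrt (by norm_num)
  have hs0 : (0:ℝ) ≤ Real.sqrt 2 := Real.sqrt_nonneg 2
  constructor
  · have h4 : (2 + Real.sqrt 2 ^ 2 : ℝ) = 4 := by rw [hs]; norm_num
    have h8 : (2 + 3 * Real.sqrt 2 ^ 2 : ℝ) = 8 := by rw [hs]; norm_num
    rw [priceOfAdaptation, h4, h8]
    have : Real.sqrt 8 = 2 * Real.sqrt 2 := by
      rw [show (8:ℝ) = 2^2 * 2 by norm_num, Real.sqrt_mul (by positivity),
        Real.sqrt_sq (by norm_num)]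
    rw [this, show Real.sqrt 4 = 2 by
      rw [show (4:ℝ) = 2^2 by norm_num, Real.sqrt_sq (by norm_num)], hs]
    ring
  · intro c hc
    set A := Real.sqrt (2 + c ^ 2) with hA
    set B := Real.sqrt (2 + 3 * c ^ 2) with hB
    have hA2 : A ^ 2 = 2 + c ^ 2 := Real.sq_sqrt (by positivity)
    have hB2 : B ^ 2 = 2 + 3 * c ^ 2 := Real.sq_sqrt (by positivity)
    have hA0 : 0 ≤ A := Real.sqrt_nonneg _
    have hB0 : 0 ≤ B := Real.sqrt_nonneg _
    -- key intermediate bound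
    have hcB : c * B * (2 + c ^ 2) ≤ 2 + 3 * c ^ 2 + 2 * c ^ 4 := by
      have hL : 0 ≤ c * B * (2 + c ^ 2) := by positivity
      have hR : (0:ℝ) ≤ 2 + 3 * c ^ 2 + 2 * c ^ 4 := by positivity
      have hsq : (c * B * (2 + c ^ 2)) ^ 2 ≤ (2 + 3 * c ^ 2 + 2 * c ^ 4) ^ 2 := by
        have key : (2 + 3 * c ^ 2 + 2 * c ^ 4) ^ 2 - c ^ 2 * (2 + 3 * c ^ 2) * (2 + c ^ 2) ^ 2
            = ((c ^ 2 - 2) * (c ^ 2 + 1)) ^ 2 := by ring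
        nlinarith [sq_nonneg ((c ^ 2 - 2) * (c ^ 2 + 1))]
      exact (pow_le_pow_iff_left₀ hL hR two_ne_zero).mp hsq
    rw [priceOfAdaptation, div_le_iff₀ (by positivity)]
    have hL : 0 ≤ A * (c + B) := by positivity
    have hR : 0 ≤ Real.sqrt 2 * (2 * (1 + c ^ 2)) := by positivity
    have hsq : (A * (c + B)) ^ 2 ≤ (Real.sqrt 2 * (2 * (1 + c ^ 2))) ^ 2 := by
      have : (Real.sqrt 2 * (2 * (1 + c ^ 2))) ^ 2 = 8 * (1 + c ^ 2) ^ 2 := by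
        rw [mul_pow, hs]; ring
      rw [this]
      have expand : (A * (c + B)) ^ 2 = (2 + c ^ 2) * (2 + 4 * c ^ 2 + 2 * (c * B)) := by
        have : (A * (c + B)) ^ 2 = A ^ 2 * (c ^ 2 + 2 * (c * B) + B ^ 2) := by ring
        rw [this, hA2, hB2]; ring
      rw [expand]
      nlinarith [hcB]
    calc A * (c + B) ≤ Real.sqrt 2 * (2 * (1 + c ^ 2)) :=
          (pow_le_pow_iff_left₀ hL hR two_ne_zero).mp hsq
end
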